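/- Let η₂, δ₁, μ₁, μ₂, Ē, F̄₁ > 0 and f(Y₁) = η₂(Ē − μ₁Y₁)Y₁ / (μ₂(δ₁(F̄₁ − Y₁) + η₂Y₁)) on Γ₁ = [0, ξ₁), ξ₁ = min(F̄₁, Ē/μ₁). If Λ = (1 + η₂/δ₁)μ₁F̄₁ − Ē > 0, then there exists a unique α ∈ (0, ξ₁) with f'(α) = 0, and f is strictly increasing on [0, α) and strictly decreasing on (α, ξ₁). -/

import Mathlib

open Set

lemma quad_root (a b c ξ : ℝ) (hb : b < 0) (hc : 0 < c) (hξ : 0 < ξ)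
    (hgξ : c + b*ξ + a*ξ^2 < 0) :
    ∃ α ∈ Ioo 0 ξ, (c + b*α + a*α^2 = 0) ∧
      (∀ β ∈ Ioo 0 ξ, c + b*β + a*β^2 = 0 → β = α) ∧
      (∀ y, 0 ≤ y → y < α → 0 < c + b*y + a*y^2) ∧
      (∀ y, α < y → y < ξ → c + b*y + a*y^2 < 0) := by
  rcases le_or_gt a 0 with ha | ha
  · -- g strictly decreasing on [0, ∞)
    have hmono : ∀ y1 y2 : ℝ, 0 ≤ y1 → y1 < y2 →
        c + b*y2 + a*y2^2 < c + b*y1 + a*y1^2 := by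
      intro y1 y2 h1 h12
      nlinarith [mul_nonneg (mul_nonneg (sub_nonneg.2 h12.le) (neg_nonneg.2 ha))
          (by linarith : (0:ℝ) ≤ y1 + y2),
        mul_neg_of_neg_of_pos hb (sub_pos.2 h12)]
    have hcont : ContinuousOn (fun y => c + b*y + a*y^2) (Icc 0 ξ) := by fun_prop
    have hsub := intermediate_value_Ioo' (le_of_lt hξ) hcont
    have h0 : (0:ℝ) ∈ Ioo (c + b*ξ + a*ξ^2) (c + b*0 + a*0^2) := by
      constructor
      · exact hgξ
      · simpa using hc
    obtain ⟨α, hαmem, hα0⟩ := hsub h0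
    have hα0' : c + b*α + a*α^2 = 0 := hα0
    refine ⟨α, hαmem, hα0', ?_, ?_, ?_⟩
    · intro β hβ hgβ
      by_contra hne
      rcases lt_or_gt_of_ne hne with h | h
      · have := hmono β α hβ.1.le h; rw [hα0', hgβ] at this; exact lt_irrefl _ this
      · have := hmono α β hαmem.1.le h; rw [hα0', hgβ] at this; exact lt_irrefl _ this
    · intro y hy hyα
      have := hmono y α hy hyα
      rw [hα0'] at this; linarith
    · intro y hαy hyξ
      have := hmono α y hαmem.1.le hαy
      rw [hα0'] at this; linarith
  · -- a > 0, use explicit roots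
    have hΔ : 0 < b^2 - 4*a*c := by
      nlinarith [sq_nonneg (b + 2*a*ξ), mul_pos ha (neg_pos.2 hgξ)]
    set s := Real.sqrt (b^2 - 4*a*c) with hs
    have hs2 : s^2 = b^2 - 4*a*c := Real.sq_sqrt hΔ.le
    have hs0 : 0 < s := Real.sqrt_pos.2 hΔ
    set α := (-b - s)/(2*a) with hαdef
    set α' := (-b + s)/(2*a) with hα'def
    have ha2 : (0:ℝ) < 2*a := by linarith
    have hfac : ∀ y, c + b*y + a*y^2 = a*(y - α)*(y - α') := by
      intro y
      rw [hαdef, hα'def]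
      field_simp
      ring_nf
      nlinarith [hs2]
    have hαα' : α < α' := by
      rw [hαdef, hα'def, div_lt_div_iff₀ ha2 ha2]
      nlinarith
    have hαpos : 0 < α := by
      rw [hαdef]
      apply div_pos _ ha2
      nlinarith [hs2, sq_nonneg s]
    have hprod : (ξ - α)*(ξ - α') < 0 := by
      have h := hfac ξ
      rw [h] at hgξ
      nlinarith
    have hαξ : α < ξ := by nlinarith
    have hξα' : ξ < α' := by nlinarith
    refine ⟨α, ⟨hαpos, hαξ⟩, ?_, ?_, ?_, ?_⟩
    · rw [hfac α]; ring
    · intro β hβ hgβ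
      rw [hfac β] at hgβ
      have hβα' : β ≠ α' := by intro h; rw [h] at hβ; exact absurd hβ.2 (not_lt.2 hξα'.le)
      rcases mul_eq_zero.1 hgβ with h | h
      · rcases mul_eq_zero.1 h with h' | h'
        · exact absurd h' (ne_of_gt ha)
        · linarith [sub_eq_zero.1 h']
      · exact absurd (sub_eq_zero.1 h) hβα'
    · intro y hy hyα
      rw [hfac y]
      have h1 : y - α < 0 := by linarith
      have h2 : y - α' < 0 := by linarith
      exact mul_pos_of_neg_of_neg (mul_neg_of_pos_of_neg ha h1) h2
    · intro y hαy hyξ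
      rw [hfac y]
      have h1 : 0 < y - α := by linarith
      have h2 : y - α' < 0 := by linarith
      exact mul_neg_of_pos_of_neg (mul_pos ha h1) h2

/-- Motif (f): if `Λ = (1 + η₂/δ₁)μ₁F̄₁ − Ē > 0` then `f` has a unique
critical point `α ∈ (0, ξ₁)`, and `f` is strictly increasing on `[0, α)` and
strictly decreasing on `(α, ξ₁)`. -/
theorem motif_f_unimodal (η₂ δ₁ μ₁ μ₂ Ebar F₁ : ℝ)
    (hη₂ : 0 < η₂) (hδ₁ : 0 < δ₁) (hμ₁ : 0 < μ₁) (hμ₂ : 0 < μ₂)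
    (hE : 0 < Ebar) (hF₁ : 0 < F₁)
    (hΛ : 0 < (1 + η₂ / δ₁) * μ₁ * F₁ - Ebar) :
    let ξ₁ : ℝ := min F₁ (Ebar / μ₁)
    let f : ℝ → ℝ := fun Y₁ =>
      η₂ * (Ebar - μ₁ * Y₁) * Y₁ / (μ₂ * (δ₁ * (F₁ - Y₁) + η₂ * Y₁))
    ∃ α, α ∈ Ioo 0 ξ₁ ∧ deriv f α = 0 ∧
      (∀ β ∈ Ioo (0 : ℝ) ξ₁, deriv f β = 0 → β = α) ∧
      StrictMonoOn f (Ico 0 α) ∧ StrictAntiOn f (Ioo α ξ₁) := by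
  intro ξ₁ f
  have hξ₁pos : 0 < ξ₁ := lt_min hF₁ (div_pos hE hμ₁)
  have hξ₁F : ξ₁ ≤ F₁ := min_le_left _ _
  set a : ℝ := (δ₁ - η₂) * μ₁ with hadef
  set b : ℝ := -(2*δ₁*μ₁*F₁) with hbdef
  set c : ℝ := δ₁*Ebar*F₁ with hcdef
  have hb : b < 0 := by
    rw [hbdef]
    have := mul_pos (mul_pos (mul_pos two_pos hδ₁) hμ₁) hF₁
    linarith
  have hc : 0 < c := by rw [hcdef]; positivity
  -- the quadratic is negative at ξ₁
  have hgξ : c + b*ξ₁ + a*ξ₁^2 < 0 := by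
    have hq : η₂/δ₁*δ₁ = η₂ := div_mul_cancel₀ _ (ne_of_gt hδ₁)
    have hq2 : η₂/δ₁*δ₁*(μ₁*F₁) = η₂*(μ₁*F₁) := by rw [hq]
    have hL : δ₁*Ebar < (δ₁+η₂)*(μ₁*F₁) := by nlinarith [mul_pos hδ₁ hΛ]
    rcases le_total F₁ (Ebar/μ₁) with h | h
    · have hξ : ξ₁ = F₁ := min_eq_left h
      rw [hξ, hadef, hbdef, hcdef]
      nlinarith
    · have hξ : ξ₁ = Ebar/μ₁ := min_eq_right h
      have hEF : Ebar ≤ F₁*μ₁ := (div_le_iff₀ hμ₁).1 h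
      have key : (c + b*(Ebar/μ₁) + a*(Ebar/μ₁)^2)*μ₁ =
          Ebar*((δ₁-η₂)*Ebar - δ₁*(μ₁*F₁)) := by
        rw [hadef, hbdef, hcdef]; field_simp; ring
      have hrhs : Ebar*((δ₁-η₂)*Ebar - δ₁*(μ₁*F₁)) < 0 := by
        nlinarith [mul_le_mul_of_nonneg_left hEF (mul_pos hδ₁ hE).le,
          mul_pos hη₂ (mul_pos hE hE)]
      rw [hξ]
      nlinarith [key]
  obtain ⟨α, hαmem, hGα, huniq, hpos, hneg⟩ := quad_root a b c ξ₁ hb hc hξ₁pos hgξ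
  -- denominator positivity
  have hD : ∀ y : ℝ, 0 ≤ y → y < F₁ → 0 < δ₁*(F₁ - y) + η₂*y := by
    intro y h0 h1
    nlinarith [mul_pos hδ₁ (sub_pos.2 h1), mul_nonneg hη₂.le h0]
  -- derivative formula
  have hhas : ∀ y : ℝ, 0 ≤ y → y < F₁ →
      HasDerivAt f (((η₂*Ebar - 2*η₂*μ₁*y) * (μ₂*(δ₁*(F₁-y)+η₂*y))
        - η₂*(Ebar - μ₁*y)*y * (μ₂*(η₂-δ₁))) / (μ₂*(δ₁*(F₁-y)+η₂*y))^2) y := by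
    intro y h0 h1
    have hDy := hD y h0 h1
    have hne : μ₂*(δ₁*(F₁-y)+η₂*y) ≠ 0 := by positivity
    have hN : HasDerivAt (fun Y : ℝ => η₂*(Ebar - μ₁*Y)*Y) (η₂*Ebar - 2*η₂*μ₁*y) y := by
      have hfeq : (fun Y : ℝ => η₂*(Ebar - μ₁*Y)*Y)
          = (fun Y : ℝ => η₂*Ebar*Y - η₂*μ₁*Y^2) := by funext Y; ring
      rw [hfeq]
      have ha1 := (hasDerivAt_id y).const_mul (η₂*Ebar)
      have ha2 := (hasDerivAt_pow 2 y).const_mul (η₂*μ₁)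
      convert ha1.sub ha2 using 1
      exacts [rfl, rfl, rfl, by ring]
    have hDen : HasDerivAt (fun Y : ℝ => μ₂*(δ₁*(F₁-Y)+η₂*Y)) (μ₂*(η₂-δ₁)) y := by
      have hfeq : (fun Y : ℝ => μ₂*(δ₁*(F₁-Y)+η₂*Y))
          = (fun Y : ℝ => μ₂*δ₁*F₁ + (μ₂*(η₂-δ₁))*Y) := by funext Y; ring
      rw [hfeq]
      have ha1 := ((hasDerivAt_id y).const_mul (μ₂*(η₂-δ₁))).const_add (μ₂*δ₁*F₁)
      convert ha1 using 1
      exacts [rfl, rfl, rfl, by ring]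
    exact hN.div hDen hne
  have hdf : ∀ y : ℝ, 0 ≤ y → y < F₁ →
      deriv f y = μ₂*η₂*(c + b*y + a*y^2) / (μ₂*(δ₁*(F₁-y)+η₂*y))^2 := by
    intro y h0 h1
    rw [(hhas y h0 h1).deriv]
    congr 1
    rw [hadef, hbdef, hcdef]
    ring
  have hdiff : ∀ y : ℝ, 0 ≤ y → y < F₁ → DifferentiableAt ℝ f y :=
    fun y h0 h1 => (hhas y h0 h1).differentiableAt
  refine ⟨α, hαmem, ?_, ?_, ?_, ?_⟩
  · rw [hdf α hαmem.1.le (lt_of_lt_of_le hαmem.2 hξ₁F), hGα]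
    simp
  · intro β hβ hdβ
    apply huniq β hβ
    rw [hdf β hβ.1.le (lt_of_lt_of_le hβ.2 hξ₁F)] at hdβ
    have hDβ := hD β hβ.1.le (lt_of_lt_of_le hβ.2 hξ₁F)
    have hden : (μ₂*(δ₁*(F₁-β)+η₂*β))^2 ≠ 0 := by positivity
    have := (div_eq_zero_iff.1 hdβ).resolve_right hden
    have hμη : μ₂*η₂ ≠ 0 := by positivity
    rcases mul_eq_zero.1 this with h | h
    · exact absurd h hμη
    · exact h
  · apply strictMonoOn_of_deriv_pos (convex_Ico 0 α)
    · intro y hy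
      exact (hdiff y hy.1 (lt_of_lt_of_le (lt_of_lt_of_le (lt_of_lt_of_le hy.2 le_rfl)
        hαmem.2.le) hξ₁F)).continuousAt.continuousWithinAt
    · intro y hy
      rw [interior_Ico] at hy
      have hyF : y < F₁ := lt_of_lt_of_le (lt_trans hy.2 hαmem.2) hξ₁F
      rw [hdf y hy.1.le hyF]
      have hGy := hpos y hy.1.le hy.2
      have hDy := hD y hy.1.le hyF
      positivity
  · apply strictAntiOn_of_deriv_neg (convex_Ioo α ξ₁)
    · intro y hy
      exact (hdiff y (le_trans hαmem.1.le hy.1.le)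
        (lt_of_lt_of_le hy.2 hξ₁F)).continuousAt.continuousWithinAt
    · intro y hy
      rw [interior_Ioo] at hy
      have hyF : y < F₁ := lt_of_lt_of_le hy.2 hξ₁F
      rw [hdf y (le_trans hαmem.1.le hy.1.le) hyF]
      have hGy := hneg y hy.1 hy.2
      have hDy := hD y (le_trans hαmem.1.le hy.1.le) hyF
      apply div_neg_of_neg_of_pos
      · nlinarith [mul_pos hμ₂ hη₂]
      · positivity
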